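/- For all integers m ≥ 0, d ≥ 2 and n ≥ 0, the coefficient υ_{m,n} := Σ_{I ⊆ ℕ₊, |I|=n} ∏_{k∈I} 1/((m+k)(m+d-1+k)) satisfies 0 ≤ υ_{m,n} ≤ m!/(m+n)!. -/
import Mathlib


open scoped BigOperators

noncomputable def upsX (d m k : ℕ) : ℝ := (1 : ℝ) / ((m + k) * (m + d - 1 + k))

noncomputable def upsE (d m a n N : ℕ) : ℝ :=
  ∑ I ∈ (Finset.Icc (a + 1) N).powersetCard n, ∏ k ∈ I, upsX d m k

lemma upsX_pos (d m k : ℕ) (hd : 2 ≤ d) (hk : 0 < k) : 0 < upsX d m k := by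
  have hm : (0:ℝ) ≤ m := Nat.cast_nonneg m
  have hk' : (1:ℝ) ≤ k := by exact_mod_cast hk
  have hd' : (2:ℝ) ≤ d := by exact_mod_cast hd
  unfold upsX
  apply div_pos one_pos
  apply mul_pos <;> linarith

lemma upsX_le (d m k : ℕ) (hd : 2 ≤ d) (hk : 0 < k) :
    upsX d m k ≤ 1 / (((m:ℝ) + k) * ((m:ℝ) + k + 1)) := by
  have hm : (0:ℝ) ≤ m := Nat.cast_nonneg m
  have hk' : (1:ℝ) ≤ k := by exact_mod_cast hk
  have hd' : (2:ℝ) ≤ d := by exact_mod_cast hd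
  unfold upsX
  apply one_div_le_one_div_of_le
  · apply mul_pos <;> linarith
  · have h1 : (0:ℝ) ≤ (m:ℝ) + k := by linarith
    nlinarith

lemma upsE_nonneg (d m a n N : ℕ) (hd : 2 ≤ d) : 0 ≤ upsE d m a n N := by
  unfold upsE
  apply Finset.sum_nonneg
  intro I hI
  apply Finset.prod_nonneg
  intro k hk
  have hI' := (Finset.mem_powersetCard.mp hI).1 hk
  have : 0 < k := by
    have := (Finset.mem_Icc.mp hI').1; omega
  exact le_of_lt (upsX_pos d m k hd this)

lemma ups_arith (a t x y : ℝ) (ha : 0 ≤ a) (ht : 0 ≤ t) (hx : 0 < x) (hy : 0 < y) :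
    (a+1)*x/((a+t+2)*y) + 1/((a+1)*(a+2)) * ((a+1)*x/y) ≤ x/y := by
  have e : 1/((a+1)*(a+2)) * ((a+1)*x/y) = ((a+1)*x)/(((a+1)*(a+2))*y) := by
    rw [one_div_mul_eq_div, div_div, mul_comm y]
  rw [e, div_add_div _ _ (by positivity) (by positivity),
    div_le_div_iff₀ (by positivity) (by positivity)]
  nlinarith [mul_pos hx hy, mul_nonneg (mul_nonneg ha ht) (mul_pos hx hy).le,
    mul_nonneg ht (mul_pos hx hy).le, mul_nonneg ha (mul_pos hx hy).le,
    mul_nonneg (mul_nonneg ha ha) (mul_nonneg ht (mul_pos hx hy).le)]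

lemma upsE_le (d m : ℕ) (hd : 2 ≤ d) :
    ∀ (L a n : ℕ),
      upsE d m a n (a + L) ≤ (Nat.factorial (m + a) : ℝ) / (Nat.factorial (m + a + n)) := by
  intro L
  induction L with
  | zero =>
    intro a n
    unfold upsE
    rw [show Finset.Icc (a+1) (a+0) = ∅ from Finset.Icc_eq_empty (by omega)]
    cases n with
    | zero =>
      rw [Finset.powersetCard_zero]
      simp only [Finset.sum_singleton, Finset.prod_empty, Nat.add_zero]
      rw [div_self (by positivity)]
    | succ n =>
      rw [show (∅ : Finset ℕ).powersetCard (n+1) = ∅ from by simp]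
      simp only [Finset.sum_empty]
      positivity
  | succ L ih =>
    intro a n
    cases n with
    | zero =>
      unfold upsE
      rw [Finset.powersetCard_zero]
      simp only [Finset.sum_singleton, Finset.prod_empty, Nat.add_zero]
      rw [div_self (by positivity)]
    | succ n =>
      have hsplit : Finset.Icc (a+1) (a + (L+1)) = insert (a+1) (Finset.Icc (a+1+1) (a+1+L)) := by
        ext x; simp only [Finset.mem_Icc, Finset.mem_insert]; omega
      have hnm : a+1 ∉ Finset.Icc (a+1+1) (a+1+L) := by
        simp only [Finset.mem_Icc]; omega
      have hEeq : upsE d m a (n+1) (a + (L+1)) =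
          upsE d m (a+1) (n+1) (a+1+L) + upsX d m (a+1) * upsE d m (a+1) n (a+1+L) := by
        unfold upsE
        rw [hsplit, Finset.powersetCard_succ_insert hnm, Finset.sum_union, Finset.sum_image]
        · rw [Finset.mul_sum]
          congr 1
          apply Finset.sum_congr rfl
          intro J hJ
          have hJ' : a+1 ∉ J := fun h => hnm ((Finset.mem_powersetCard.mp hJ).1 h)
          rw [Finset.prod_insert hJ']
        · intro J1 h1 J2 h2 heq
          have h1' : a+1 ∉ J1 := fun h => hnm ((Finset.mem_powersetCard.mp h1).1 h)
          have h2' : a+1 ∉ J2 := fun h => hnm ((Finset.mem_powersetCard.mp h2).1 h)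
          have : (insert (a+1) J1).erase (a+1) = (insert (a+1) J2).erase (a+1) := by rw [heq]
          rwa [Finset.erase_insert h1', Finset.erase_insert h2'] at this
        · rw [Finset.disjoint_left]
          intro I hI hI2
          have hsub := (Finset.mem_powersetCard.mp hI).1
          obtain ⟨J, hJ, rfl⟩ := Finset.mem_image.mp hI2
          exact hnm (hsub (Finset.mem_insert_self _ _))
      rw [hEeq]
      have h1 := ih (a+1) (n+1)
      have h2 := ih (a+1) n
      have hX := upsX_le d m (a+1) hd (by omega)
      push_cast at hX
      have hX0 := le_of_lt (upsX_pos d m (a+1) hd (by omega))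
      have hE2 := upsE_nonneg d m (a+1) n (a+1+L) hd
      rw [show m+(a+1)+(n+1) = m+a+n+2 from by omega, show m+(a+1) = m+a+1 from by omega] at h1
      rw [show m+(a+1)+n = m+a+n+1 from by omega, show m+(a+1) = m+a+1 from by omega] at h2
      rw [show m+a+(n+1) = m+a+n+1 from by omega]
      have hfx : (0:ℝ) < Nat.factorial (m+a) := by positivity
      have hfy : (0:ℝ) < Nat.factorial (m+a+n+1) := by positivity
      calc upsE d m (a+1) (n+1) (a+1+L) + upsX d m (a+1) * upsE d m (a+1) n (a+1+L)
          ≤ (Nat.factorial (m+a+1) : ℝ) / (Nat.factorial (m+a+n+2))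
            + (1 / (((m:ℝ) + (a+1)) * ((m:ℝ) + (a+1) + 1)))
              * ((Nat.factorial (m+a+1) : ℝ) / (Nat.factorial (m+a+n+1))) := by
            apply add_le_add h1
            apply mul_le_mul hX h2 hE2
            positivity
        _ ≤ (Nat.factorial (m+a) : ℝ) / (Nat.factorial (m+a+n+1)) := by
            have f1 : (Nat.factorial (m+a+1) : ℝ) = ((m:ℝ)+(a:ℝ)+1) * Nat.factorial (m+a) := by
              rw [Nat.factorial_succ]; push_cast; ring
            have f2 : (Nat.factorial (m+a+n+2) : ℝ)
                = ((m:ℝ)+(a:ℝ)+(n:ℝ)+2) * Nat.factorial (m+a+n+1) := by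
              rw [show m+a+n+2 = (m+a+n+1)+1 from rfl, Nat.factorial_succ]; push_cast; ring
            have f3 : ((m:ℝ) + ((a:ℝ)+1)) = ((m:ℝ)+(a:ℝ)) + 1 := by ring
            have f4 : ((m:ℝ) + (a:ℝ) + 1 + 1) = ((m:ℝ)+(a:ℝ)) + 2 := by ring
            rw [f1, f2, f3, f4]
            have := ups_arith ((m:ℝ)+(a:ℝ)) (n:ℝ) (Nat.factorial (m+a) : ℝ)
              (Nat.factorial (m+a+n+1) : ℝ) (by positivity) (Nat.cast_nonneg n) hfx hfy
            convert this using 2 <;> ring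

/-- υ_{m,n}: sum over n-element subsets of the positive integers of
∏_{k∈I} 1/((m+k)(m+d-1+k)). -/
noncomputable def upsilon (d m n : ℕ) : ℝ :=
  ∑' I : {s : Finset ℕ // s.card = n ∧ ∀ k ∈ s, 0 < k},
    ∏ k ∈ I.1, (1 : ℝ) / ((m + k) * (m + d - 1 + k))

theorem upsilon_nonneg_and_le_factorial_ratio (d m n : ℕ) (hd : 2 ≤ d) :
    0 ≤ upsilon d m n ∧
      upsilon d m n ≤ (Nat.factorial m : ℝ) / (Nat.factorial (m + n)) := by
  have hterm : ∀ I : {s : Finset ℕ // s.card = n ∧ ∀ k ∈ s, 0 < k},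
      0 ≤ ∏ k ∈ I.1, (1 : ℝ) / ((m + k) * (m + d - 1 + k)) := by
    intro I
    apply Finset.prod_nonneg
    intro k hk
    exact le_of_lt (upsX_pos d m k hd (I.2.2 k hk))
  constructor
  · exact tsum_nonneg hterm
  · unfold upsilon
    apply tsum_le_of_sum_le' (by positivity)
    intro u
    set N := u.sup (fun I => I.1.sup id) with hN
    have hsub : u.image Subtype.val ⊆ (Finset.Icc (0+1) N).powersetCard n := by
      intro s hs
      obtain ⟨I, hIu, rfl⟩ := Finset.mem_image.mp hs
      apply Finset.mem_powersetCard.mpr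
      refine ⟨?_, I.2.1⟩
      intro k hk
      rw [Finset.mem_Icc]
      constructor
      · exact I.2.2 k hk
      · calc k = id k := rfl
          _ ≤ I.1.sup id := Finset.le_sup hk
          _ ≤ N := Finset.le_sup (f := fun I => I.1.sup id) hIu
    calc ∑ I ∈ u, ∏ k ∈ I.1, (1 : ℝ) / ((m + k) * (m + d - 1 + k))
        = ∑ s ∈ u.image Subtype.val, ∏ k ∈ s, (1 : ℝ) / ((m + k) * (m + d - 1 + k)) := by
          rw [Finset.sum_image]
          intro x _ y _ h
          exact Subtype.val_injective h
      _ ≤ ∑ s ∈ (Finset.Icc (0+1) N).powersetCard n,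
            ∏ k ∈ s, (1 : ℝ) / ((m + k) * (m + d - 1 + k)) := by
          apply Finset.sum_le_sum_of_subset_of_nonneg hsub
          intro s hs _
          apply Finset.prod_nonneg
          intro k hk
          have hk1 : 0 < k := by
            have := Finset.mem_Icc.mp ((Finset.mem_powersetCard.mp hs).1 hk)
            omega
          exact le_of_lt (upsX_pos d m k hd hk1)
      _ = upsE d m 0 n N := rfl
      _ ≤ (Nat.factorial m : ℝ) / (Nat.factorial (m + n)) := by
          have := upsE_le d m hd N 0 n
          simpa using this
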